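/- Let C be an alphabet and l ≥ 0. Applying ∂_{t-1} to the polynomial e_{l+t}(C - x_t - x_{t+1} - ... - x_b) := Σ_{j=0}^{l+t} (-1)^j e_{l+t-j}(C) h_j(x_t,...,x_b) yields e_{l+t-1}(C - x_{t-1} - x_t - ... - x_b), where the e_i(C) are treated as constants (scalars). -/

import Mathlib

open PowerSeries

variable {R : Type*} [CommRing R]

/-- The geometric series `Σ xⁿ tⁿ`, i.e. the formal power series `1/(1 - x·t)`:
it is the (unique) inverse of `1 - x·t` in `R⟦t⟧`. -/
noncomputable def geomInv (x : R) : PowerSeries R := PowerSeries.mk fun n => x ^ n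

/-- The generating function `E_A(t) = Π_{x ∈ A} (1 + x·t)` of the elementary symmetric
functions of an alphabet `A` (a finite multiset). -/
noncomputable def eGen (A : Multiset R) : PowerSeries R :=
  (A.map fun x => 1 + PowerSeries.C x * PowerSeries.X).prod

/-- The generating function `H_A(t) = Π_{x ∈ A} 1/(1 - x·t)` of the complete homogeneous
symmetric functions of an alphabet `A`. -/
noncomputable def hGen (A : Multiset R) : PowerSeries R :=
  (A.map fun x => geomInv x).prod

/-- `e_i(A)`: the `i`-th elementary symmetric function of the alphabet `A`. -/
noncomputable def eA (A : Multiset R) (i : ℕ) : R := PowerSeries.coeff i (eGen A)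

/-- `h_i(A)`: the `i`-th complete homogeneous symmetric function of the alphabet `A`. -/
noncomputable def hA (A : Multiset R) (i : ℕ) : R := PowerSeries.coeff i (hGen A)

/-- `e_i(A - B)`, defined by the generating function
`Π_{x ∈ A} (1 + x·t) · Π_{y ∈ B} 1/(1 + y·t)`. -/
noncomputable def eDiff (A B : Multiset R) (i : ℕ) : R :=
  PowerSeries.coeff i (eGen A * (B.map fun y => geomInv (-y)).prod)

/-- `h_i(A - B)`, defined by the generating function
`Π_{x ∈ A} 1/(1 - x·t) · Π_{y ∈ B} (1 - y·t)`. -/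
noncomputable def hDiff (A B : Multiset R) (i : ℕ) : R :=
  PowerSeries.coeff i (hGen A * (B.map fun y => 1 - PowerSeries.C y * PowerSeries.X).prod)

open MvPolynomial

/-- The ambient ring `ℤ[c_1, c_2, …][x_1, x_2, …]`: the variable `Sum.inl i` is the
scalar `c_i = e_i(C)`, and `Sum.inr m` is the variable `x_m`. -/
abbrev R12 : Type := MvPolynomial (ℕ ⊕ ℕ) ℤ

/-- `e_i(C)`: treated as a constant, with `e_0(C) = 1`. -/
noncomputable def cval (i : ℕ) : R12 := if i = 0 then 1 else X (Sum.inl i)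

/-- The multiset of variables `x_t, …, x_b`. -/
noncomputable def xs (t b : ℕ) : Multiset R12 :=
  (Finset.Icc t b).val.map fun m => (X (Sum.inr m) : R12)

/-- `e_N(C - x_t - ⋯ - x_b) := Σ_{j=0}^N (-1)^j e_{N-j}(C) h_j(x_t, …, x_b)`. -/
noncomputable def eCminus (b t N : ℕ) : R12 :=
  ∑ j ∈ Finset.range (N + 1), (-1 : R12) ^ j * cval (N - j) * hA (xs t b) j

/-- `D` is the divided difference operator `∂_{t-1}` (swapping `x_{t-1}` and `x_t`),
characterized by `(x_{t-1} - x_t) * D P = P - s_{t-1} P`; the constants `c_i` are fixed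
by the transposition. -/
def IsDividedDiffX (i : ℕ) (D : R12 → R12) : Prop :=
  ∀ P : R12, (X (Sum.inr i) - X (Sum.inr (i + 1))) * D P =
    P - rename ⇑(Equiv.swap (Sum.inr i : ℕ ⊕ ℕ) (Sum.inr (i + 1))) P

lemma one_sub_mul_geomInv (x : R) :
    (1 - PowerSeries.C x * PowerSeries.X) * geomInv x = 1 := by
  ext n
  cases n with
  | zero => simp [geomInv]
  | succ n =>
      rw [sub_mul, one_mul, map_sub, mul_assoc, PowerSeries.coeff_C_mul,
        PowerSeries.coeff_succ_X_mul]
      simp [geomInv, pow_succ, mul_comm]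

lemma rescale_neg_one_geomInv (x : R) :
    PowerSeries.rescale (-1) (geomInv x) = geomInv (-x) := by
  ext n
  rw [PowerSeries.coeff_rescale]
  simp only [geomInv, PowerSeries.coeff_mk]
  rw [← neg_one_mul x, mul_pow]

lemma prod_geomInv_neg (A : Multiset R) :
    ((A.map fun x => geomInv (-x)).prod) = PowerSeries.rescale (-1) (hGen A) := by
  rw [hGen, map_multiset_prod, Multiset.map_map]
  congr 1
  exact Multiset.map_congr rfl fun x _ => (rescale_neg_one_geomInv x).symm

lemma coeff_prod_geomInv_neg (A : Multiset R) (j : ℕ) :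
    PowerSeries.coeff j ((A.map fun x => geomInv (-x)).prod) = (-1) ^ j * hA A j := by
  rw [prod_geomInv_neg, PowerSeries.coeff_rescale, hA]

lemma map_geomInv {S : Type*} [CommRing S] (φ : R →+* S) (x : R) :
    PowerSeries.map φ (geomInv x) = geomInv (φ x) := by
  ext n; simp [geomInv]

noncomputable def FC : PowerSeries R12 := PowerSeries.mk cval

lemma eCminus_eq_coeff (b t N : ℕ) :
    eCminus b t N = PowerSeries.coeff N
      (FC * ((xs t b).map fun x => geomInv (-x)).prod) := by
  rw [PowerSeries.coeff_mul, Finset.Nat.sum_antidiagonal_eq_sum_range_succ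
    (fun i j => PowerSeries.coeff i FC *
      PowerSeries.coeff j (((xs t b).map fun x => geomInv (-x)).prod)) N]
  rw [← Finset.sum_range_reflect, eCminus]
  apply Finset.sum_congr rfl
  intro j hj
  rw [Finset.mem_range] at hj
  have h1 : N + 1 - 1 - j = N - j := by omega
  have h2 : N - (N - j) = j := by omega
  rw [h1, coeff_prod_geomInv_neg, h2]
  simp only [FC, PowerSeries.coeff_mk]
  ring

lemma rename_coeff (f : ℕ ⊕ ℕ → ℕ ⊕ ℕ) (hf : ∀ i, f (Sum.inl i) = Sum.inl i)
    (A : Multiset R12) (N : ℕ) :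
    rename f (PowerSeries.coeff N (FC * (A.map fun x => geomInv (-x)).prod)) =
    PowerSeries.coeff N (FC * ((A.map (rename f)).map fun x => geomInv (-x)).prod) := by
  set φ : R12 →+* R12 := (rename f).toRingHom with hφ
  have h1 : PowerSeries.map φ FC = FC := by
    apply PowerSeries.ext; intro n
    rw [PowerSeries.coeff_map]
    simp only [FC, PowerSeries.coeff_mk]
    show rename f (cval n) = cval n
    unfold cval
    split
    · simp
    · rw [rename_X, hf]
  have h2 : PowerSeries.map φ ((A.map fun x => geomInv (-x)).prod)
      = ((A.map (rename f)).map fun x => geomInv (-x)).prod := by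
    rw [map_multiset_prod, Multiset.map_map, Multiset.map_map]
    congr 1
    apply Multiset.map_congr rfl
    intro x _
    show PowerSeries.map φ (geomInv (-x)) = geomInv (-(rename f x))
    rw [map_geomInv, map_neg]
    rfl
  show φ _ = _
  rw [← PowerSeries.coeff_map, map_mul, h1, h2]

/-- Applying `∂_{t-1}` to `e_{l+t}(C - x_t - ⋯ - x_b)` yields
`e_{l+t-1}(C - x_{t-1} - ⋯ - x_b)`. -/
theorem divided_diff_eCminus (b t l : ℕ) (ht : 2 ≤ t) (htb : t ≤ b)
    (D : R12 → R12) (hD : IsDividedDiffX (t - 1) D) :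
    D (eCminus b t (l + t)) = eCminus b (t - 1) (l + t - 1) := by
  set y : R12 := X (Sum.inr (t - 1)) with hy0
  set z : R12 := X (Sum.inr t) with hz0
  set σe := Equiv.swap (Sum.inr (t - 1) : ℕ ⊕ ℕ) (Sum.inr t) with hσe
  set G1 : PowerSeries R12 := ((xs (t + 1) b).map fun x => geomInv (-x)).prod with hG1
  -- splitting the intervals
  have hi1 : (Finset.Icc t b) = Finset.cons t (Finset.Icc (t + 1) b)
      (by simp only [Finset.mem_Icc]; omega) := by
    ext m
    simp only [Finset.mem_Icc, Finset.mem_cons]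
    omega
  have hi2 : (Finset.Icc (t - 1) b) = Finset.cons (t - 1) (Finset.Icc t b)
      (by simp only [Finset.mem_Icc]; omega) := by
    ext m
    simp only [Finset.mem_Icc, Finset.mem_cons]
    omega
  have hxs1 : xs t b = z ::ₘ xs (t + 1) b := by
    rw [xs, hi1, Finset.cons_val, Multiset.map_cons]; rfl
  have hxs2 : xs (t - 1) b = y ::ₘ xs t b := by
    rw [xs, hi2, Finset.cons_val, Multiset.map_cons]; rfl
  have hGt : ((xs t b).map fun x => geomInv (-x)).prod = geomInv (-z) * G1 := by
    rw [hxs1, Multiset.map_cons, Multiset.prod_cons]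
  have hGt1 : ((xs (t - 1) b).map fun x => geomInv (-x)).prod
      = geomInv (-y) * (geomInv (-z) * G1) := by
    rw [hxs2, Multiset.map_cons, Multiset.prod_cons, hGt]
  -- action of the swap on the alphabet
  have hswap_xs : (xs t b).map (rename ⇑σe) = y ::ₘ xs (t + 1) b := by
    rw [hxs1, Multiset.map_cons]
    congr 1
    · show rename (⇑σe) (X (Sum.inr t)) = y
      rw [rename_X, hσe, Equiv.swap_apply_right]
    · rw [xs, Multiset.map_map]
      apply Multiset.map_congr rfl
      intro m hm
      rw [Finset.mem_val, Finset.mem_Icc] at hm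
      show rename (⇑σe) (X (Sum.inr m)) = X (Sum.inr m)
      rw [rename_X, hσe, Equiv.swap_apply_of_ne_of_ne]
      · intro h; simp only [Sum.inr.injEq] at h; omega
      · intro h; simp only [Sum.inr.injEq] at h; omega
  -- expressions as coefficients
  have hP : eCminus b t (l + t)
      = PowerSeries.coeff (l + t) (FC * (geomInv (-z) * G1)) := by
    rw [eCminus_eq_coeff, hGt]
  have hQ : eCminus b (t - 1) (l + t - 1)
      = PowerSeries.coeff (l + t - 1)
          (FC * (geomInv (-y) * (geomInv (-z) * G1))) := by
    rw [eCminus_eq_coeff, hGt1]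
  have hsP : rename ⇑σe (eCminus b t (l + t))
      = PowerSeries.coeff (l + t) (FC * (geomInv (-y) * G1)) := by
    rw [eCminus_eq_coeff, rename_coeff ⇑σe (fun i => by
      rw [hσe, Equiv.swap_apply_of_ne_of_ne] <;> simp), hswap_xs,
      Multiset.map_cons, Multiset.prod_cons]
  -- the power series identity
  have hu : (1 + PowerSeries.C y * PowerSeries.X) * geomInv (-y) = 1 := by
    have := one_sub_mul_geomInv (-y)
    rwa [map_neg, neg_mul, sub_neg_eq_add] at this
  have hv : (1 + PowerSeries.C z * PowerSeries.X) * geomInv (-z) = 1 := by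
    have := one_sub_mul_geomInv (-z)
    rwa [map_neg, neg_mul, sub_neg_eq_add] at this
  have hgg : geomInv (-z) - geomInv (-y)
      = ((PowerSeries.C y - PowerSeries.C z) * PowerSeries.X)
          * (geomInv (-y) * geomInv (-z)) := by
    linear_combination geomInv (-y) * hv - geomInv (-z) * hu
  -- the key identity
  have hkey : eCminus b t (l + t) - rename ⇑σe (eCminus b t (l + t))
      = (y - z) * eCminus b (t - 1) (l + t - 1) := by
    rw [hsP, hP, hQ, ← map_sub]
    have hS : FC * (geomInv (-z) * G1) - FC * (geomInv (-y) * G1)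
        = PowerSeries.C (y - z) *
            (PowerSeries.X * (FC * (geomInv (-y) * (geomInv (-z) * G1)))) := by
      rw [map_sub]
      linear_combination (FC * G1) * hgg
    rw [hS]
    obtain ⟨M, hM⟩ : ∃ M, l + t = M + 1 := ⟨l + t - 1, by omega⟩
    rw [hM, PowerSeries.coeff_C_mul, PowerSeries.coeff_succ_X_mul, Nat.add_sub_cancel]
  -- conclude
  have hne : y - z ≠ 0 := by
    rw [sub_ne_zero]
    intro h
    have := MvPolynomial.X_injective h
    simp only [Sum.inr.injEq] at this
    omega
  have hDP := hD (eCminus b t (l + t))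
  have ht1 : t - 1 + 1 = t := by omega
  rw [ht1] at hDP
  rw [hkey] at hDP
  exact mul_left_cancel₀ hne hDP
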